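/- For any two total recursive functions g and h, the equality property P_eq is computable in the limit, where P_eq(⟨i,j⟩) = 1 if φ_i is g-easy, φ_j is h-easy, and φ_i = φ_j; P_eq(⟨i,j⟩) = 0 if φ_i is g-easy, φ_j is h-easy, and φ_i ≠ φ_j; and P_eq(⟨i,j⟩) l-diverges if φ_i is not g-easy or φ_j is not h-easy. -/

import Mathlib

open Nat.Partrec (Code)

/-- `φ i` is the partial recursive function with index `i`. -/
def φ (i : ℕ) : ℕ →. ℕ := (Denumerable.ofNat Code i).eval

/-- `LConv ψ x v`: the guessing function `ψ` on input `x` l-converges in the limit to `v`: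
there is a `u` with `ψ x u = v` and for all `t > u`, `ψ x t = v` whenever it converges. -/
def LConv (ψ : ℕ → ℕ →. ℕ) (x v : ℕ) : Prop :=
  ∃ u, v ∈ ψ x u ∧ ∀ t, u < t → ∀ w ∈ ψ x t, w = v

/-- φ_i is h-easy: its running time is bounded by h on all but finitely many inputs. -/
def Easy (h : ℕ → ℕ) (i : ℕ) : Prop :=
  ∃ N, ∀ x, N ≤ x → (Nat.Partrec.Code.evaln (h x) (Denumerable.ofNat Code i) x).isSome

/-- The code of index `i`. -/
def cod (i : ℕ) : Code := Denumerable.ofNat Code i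

/-- The single-point equality check at `x`, using step bound `max t (max (g x) (h x))`. -/
def chk (g h : ℕ → ℕ) (a : ℕ × ℕ) (x : ℕ) : Bool :=
  decide (Nat.Partrec.Code.evaln (max a.2 (max (g x) (h x))) (cod a.1.unpair.1) x
    = Nat.Partrec.Code.evaln (max a.2 (max (g x) (h x))) (cod a.1.unpair.2) x)

/-- The conjunction of `chk` over `x < n`. -/
def allUpTo (g h : ℕ → ℕ) (a : ℕ × ℕ) (n : ℕ) : Bool :=
  Nat.rec true (fun y IH => IH && chk g h a y) n

/-- Whether the stage `a.2` is "bad" for the pair of indices `a.1`. -/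
def badB (g h : ℕ → ℕ) (a : ℕ × ℕ) : Bool :=
  !((Nat.Partrec.Code.evaln (g a.2) (cod a.1.unpair.1) a.2).isSome
    && (Nat.Partrec.Code.evaln (h a.2) (cod a.1.unpair.2) a.2).isSome)

/-- The guessing function. -/
def G (g h : ℕ → ℕ) (a : ℕ × ℕ) : ℕ :=
  bif badB g h a then a.2 + 2 else bif allUpTo g h a (a.2 + 1) then 1 else 0

lemma allUpTo_iff (g h : ℕ → ℕ) (a : ℕ × ℕ) (n : ℕ) :
    allUpTo g h a n = true ↔ ∀ x < n, chk g h a x = true := by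
  induction n with
  | zero => simp [allUpTo]
  | succ n ih =>
    show (allUpTo g h a n && chk g h a n) = true ↔ _
    rw [Bool.and_eq_true, ih]
    constructor
    · rintro ⟨h1, h2⟩ x hx
      rcases Nat.lt_succ_iff_lt_or_eq.mp hx with hx | rfl
      · exact h1 x hx
      · exact h2
    · intro h1
      exact ⟨fun x hx => h1 x (hx.trans (Nat.lt_succ_self _)), h1 n (Nat.lt_succ_self _)⟩

lemma eventual_eq {i j x : ℕ} (hx : φ i x = φ j x) :
    ∃ k, ∀ s, k ≤ s →
      Nat.Partrec.Code.evaln s (cod i) x = Nat.Partrec.Code.evaln s (cod j) x := by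
  by_cases hd : ∃ v, v ∈ φ i x
  · obtain ⟨v, hv⟩ := hd
    have hv' : v ∈ φ j x := hx ▸ hv
    obtain ⟨k1, hk1⟩ := Nat.Partrec.Code.evaln_complete.mp hv
    obtain ⟨k2, hk2⟩ := Nat.Partrec.Code.evaln_complete.mp hv'
    refine ⟨max k1 k2, fun s hs => ?_⟩
    have e1 := Nat.Partrec.Code.evaln_mono (le_trans (le_max_left _ _) hs) hk1
    have e2 := Nat.Partrec.Code.evaln_mono (le_trans (le_max_right _ _) hs) hk2
    rw [Option.mem_def] at e1 e2
    simp only [cod]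
    rw [e1, e2]
  · refine ⟨0, fun s _ => ?_⟩
    have hd' : ¬∃ v, v ∈ φ j x := by rwa [← hx]
    have n1 : Nat.Partrec.Code.evaln s (cod i) x = none := by
      cases hE : Nat.Partrec.Code.evaln s (cod i) x with
      | none => rfl
      | some w =>
        exact absurd ⟨w, Nat.Partrec.Code.evaln_sound (Option.mem_def.mpr hE)⟩ hd
    have n2 : Nat.Partrec.Code.evaln s (cod j) x = none := by
      cases hE : Nat.Partrec.Code.evaln s (cod j) x with
      | none => rfl
      | some w =>
        exact absurd ⟨w, Nat.Partrec.Code.evaln_sound (Option.mem_def.mpr hE)⟩ hd'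
    rw [n1, n2]

lemma evaln_none_of_not_dom {i x : ℕ} (hd : ¬∃ v, v ∈ φ i x) (s : ℕ) :
    Nat.Partrec.Code.evaln s (cod i) x = none := by
  cases hE : Nat.Partrec.Code.evaln s (cod i) x with
  | none => rfl
  | some w =>
    exact absurd ⟨w, Nat.Partrec.Code.evaln_sound (Option.mem_def.mpr hE)⟩ hd

lemma eventual_ne {i j x : ℕ} (hx : φ i x ≠ φ j x) :
    ∃ k, ∀ s, k ≤ s →
      Nat.Partrec.Code.evaln s (cod i) x ≠ Nat.Partrec.Code.evaln s (cod j) x := by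
  by_cases hdi : ∃ v, v ∈ φ i x
  · obtain ⟨v, hv⟩ := hdi
    obtain ⟨k1, hk1⟩ := Nat.Partrec.Code.evaln_complete.mp hv
    by_cases hdj : ∃ w, w ∈ φ j x
    · obtain ⟨w, hw⟩ := hdj
      obtain ⟨k2, hk2⟩ := Nat.Partrec.Code.evaln_complete.mp hw
      have hvw : v ≠ w := by
        rintro rfl
        exact hx ((Part.eq_some_iff.mpr hv).trans (Part.eq_some_iff.mpr hw).symm)
      refine ⟨max k1 k2, fun s hs => ?_⟩
      have e1 := Nat.Partrec.Code.evaln_mono (le_trans (le_max_left _ _) hs) hk1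
      have e2 := Nat.Partrec.Code.evaln_mono (le_trans (le_max_right _ _) hs) hk2
      rw [Option.mem_def] at e1 e2
      simp only [cod]
      rw [e1, e2]
      simp [hvw]
    · refine ⟨k1, fun s hs => ?_⟩
      have e1 := Nat.Partrec.Code.evaln_mono hs hk1
      have n2 := evaln_none_of_not_dom hdj s
      rw [Option.mem_def] at e1
      simp only [cod] at e1 n2 ⊢
      rw [e1, n2]
      simp
  · by_cases hdj : ∃ w, w ∈ φ j x
    · obtain ⟨w, hw⟩ := hdj
      obtain ⟨k2, hk2⟩ := Nat.Partrec.Code.evaln_complete.mp hw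
      refine ⟨k2, fun s hs => ?_⟩
      have e2 := Nat.Partrec.Code.evaln_mono hs hk2
      have n1 := evaln_none_of_not_dom hdi s
      rw [Option.mem_def] at e2
      simp only [cod] at e2 n1 ⊢
      rw [e2, n1]
      simp
    · exfalso
      apply hx
      rw [Part.eq_none_iff.mpr (fun a ha => hdi ⟨a, ha⟩),
        Part.eq_none_iff.mpr (fun a ha => hdj ⟨a, ha⟩)]

/-- On "good" points the approximations agree with the true values for large enough bounds. -/
lemma good_eq {g h : ℕ → ℕ} {i j x : ℕ}
    (hi : (Nat.Partrec.Code.evaln (g x) (cod i) x).isSome)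
    (hj : (Nat.Partrec.Code.evaln (h x) (cod j) x).isSome)
    (hx : φ i x = φ j x) (s : ℕ) (hs : max (g x) (h x) ≤ s) :
    Nat.Partrec.Code.evaln s (cod i) x = Nat.Partrec.Code.evaln s (cod j) x := by
  obtain ⟨v, hv⟩ := Option.isSome_iff_exists.mp hi
  obtain ⟨w, hw⟩ := Option.isSome_iff_exists.mp hj
  have hv1 : v ∈ Nat.Partrec.Code.evaln s (cod i) x :=
    Nat.Partrec.Code.evaln_mono (le_trans (le_max_left _ _) hs) (Option.mem_def.mpr hv)
  have hw1 : w ∈ Nat.Partrec.Code.evaln s (cod j) x :=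
    Nat.Partrec.Code.evaln_mono (le_trans (le_max_right _ _) hs) (Option.mem_def.mpr hw)
  have hv2 : v ∈ φ i x := Nat.Partrec.Code.evaln_sound hv1
  have hw2 : w ∈ φ j x := Nat.Partrec.Code.evaln_sound hw1
  have : v = w := Part.mem_unique (hx ▸ hv2) hw2
  rw [Option.mem_def] at hv1 hw1
  rw [hv1, hw1, this]

set_option maxHeartbeats 1000000 in
lemma G_computable {g h : ℕ → ℕ} (hg : Computable g) (hh : Computable h) :
    Computable (G g h) := by
  have hcod : Computable cod := (Primrec.ofNat Code).to_comp
  have hev : Computable fun a : (ℕ × Code) × ℕ =>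
      Nat.Partrec.Code.evaln a.1.1 a.1.2 a.2 := Nat.Partrec.Code.primrec_evaln.to_comp
  have hu1 : Computable fun a : ℕ × ℕ => a.1.unpair.1 :=
    (Primrec.fst.comp (Primrec.unpair.comp Primrec.fst)).to_comp
  have hu2 : Computable fun a : ℕ × ℕ => a.1.unpair.2 :=
    (Primrec.snd.comp (Primrec.unpair.comp Primrec.fst)).to_comp
  have hmax : Computable₂ (@max ℕ _) := Primrec.nat_max.to_comp
  -- computability of chk (uncurried)
  have hbound : Computable fun p : (ℕ × ℕ) × ℕ =>
      max p.1.2 (max (g p.2) (h p.2)) :=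
    hmax.comp (Computable.snd.comp Computable.fst)
      (hmax.comp (hg.comp Computable.snd) (hh.comp Computable.snd))
  have hchk : Computable₂ (chk g h) := by
    have h1 : Computable fun p : (ℕ × ℕ) × ℕ =>
        Nat.Partrec.Code.evaln (max p.1.2 (max (g p.2) (h p.2)))
          (cod p.1.1.unpair.1) p.2 :=
      hev.comp ((hbound.pair ((hcod.comp hu1).comp Computable.fst)).pair Computable.snd)
    have h2 : Computable fun p : (ℕ × ℕ) × ℕ =>
        Nat.Partrec.Code.evaln (max p.1.2 (max (g p.2) (h p.2)))
          (cod p.1.1.unpair.2) p.2 :=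
      hev.comp ((hbound.pair ((hcod.comp hu2).comp Computable.fst)).pair Computable.snd)
    exact (Primrec.eq.decide.to_comp.comp h1 h2).to₂
  -- computability of allUpTo at n = a.2 + 1
  have hall : Computable fun a : ℕ × ℕ => allUpTo g h a (a.2 + 1) := by
    have := Computable.nat_rec (f := fun a : ℕ × ℕ => a.2 + 1)
      (g := fun _ : ℕ × ℕ => true)
      (h := fun (a : ℕ × ℕ) (p : ℕ × Bool) => p.2 && chk g h a p.1)
      (Computable.succ.comp Computable.snd) (Computable.const true)
      ((Primrec.and.to_comp.comp (Computable.snd.comp Computable.snd)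
        (hchk.comp Computable.fst (Computable.fst.comp Computable.snd))).to₂)
    exact this.of_eq fun a => by
      simp only [allUpTo]
  -- computability of badB
  have hbad : Computable (badB g h) := by
    have h1 : Computable fun a : ℕ × ℕ =>
        (Nat.Partrec.Code.evaln (g a.2) (cod a.1.unpair.1) a.2).isSome :=
      Primrec.option_isSome.to_comp.comp
        (hev.comp (((hg.comp Computable.snd).pair (hcod.comp hu1)).pair Computable.snd))
    have h2 : Computable fun a : ℕ × ℕ =>
        (Nat.Partrec.Code.evaln (h a.2) (cod a.1.unpair.2) a.2).isSome :=
      Primrec.option_isSome.to_comp.comp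
        (hev.comp (((hh.comp Computable.snd).pair (hcod.comp hu2)).pair Computable.snd))
    exact Primrec.not.to_comp.comp (Primrec.and.to_comp.comp h1 h2)
  exact Computable.cond hbad
    (Computable.succ.comp (Computable.succ.comp Computable.snd))
    (Computable.cond hall (Computable.const 1) (Computable.const 0))

theorem stmt7 (g h : ℕ → ℕ) (hg : Computable g) (hh : Computable h) :
    ∃ ψ : ℕ → ℕ →. ℕ, Partrec₂ ψ ∧ ∀ i j : ℕ,
      (Easy g i → Easy h j → (∀ x, φ i x = φ j x) → LConv ψ (Nat.pair i j) 1) ∧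
      (Easy g i → Easy h j → (∃ x, φ i x ≠ φ j x) → LConv ψ (Nat.pair i j) 0) ∧
      ((¬ Easy g i ∨ ¬ Easy h j) → ¬ ∃ v, LConv ψ (Nat.pair i j) v) := by
  refine ⟨fun p t => Part.some (G g h (p, t)), ?_, ?_⟩
  · have : Computable₂ fun p t : ℕ => G g h (p, t) := (G_computable hg hh).to₂
    exact this.partrec₂
  intro i j
  have hup : (Nat.pair i j).unpair = (i, j) := Nat.unpair_pair i j
  -- how the guess evaluates
  have hmem : ∀ t w, w ∈ (fun p t => Part.some (G g h (p, t))) (Nat.pair i j) t ↔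
      w = G g h (Nat.pair i j, t) := fun t w => Part.mem_some_iff
  refine ⟨?_, ?_, ?_⟩
  · -- equal case
    rintro ⟨N1, hN1⟩ ⟨N2, hN2⟩ heq
    choose k hk using fun x => eventual_eq (heq x)
    set N := max N1 N2 with hN
    set T0 := max N ((Finset.range N).sup k) with hT0
    have hnotbad : ∀ t, N ≤ t → badB g h (Nat.pair i j, t) = false := by
      intro t ht
      have hA := hN1 t (le_trans (le_max_left _ _) ht)
      have hB := hN2 t (le_trans (le_max_right _ _) ht)
      simp [badB, cod, hup, hA, hB]
    have hchkall : ∀ t, T0 ≤ t → ∀ x, x < t + 1 → chk g h (Nat.pair i j, t) x = true := by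
      intro t ht x _
      simp only [chk, hup, decide_eq_true_eq]
      by_cases hxN : N ≤ x
      · exact good_eq (hN1 x (le_trans (le_max_left _ _) hxN))
          (hN2 x (le_trans (le_max_right _ _) hxN)) (heq x) _ (le_max_right _ _)
      · push_neg at hxN
        apply hk x
        calc k x ≤ (Finset.range N).sup k := Finset.le_sup (Finset.mem_range.mpr hxN)
        _ ≤ T0 := le_trans (le_max_right _ _) (le_refl _)
        _ ≤ t := ht
        _ ≤ max t (max (g x) (h x)) := le_max_left _ _
    have hG1 : ∀ t, T0 ≤ t → G g h (Nat.pair i j, t) = 1 := by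
      intro t ht
      have hb := hnotbad t (le_trans (le_max_left _ _) ht)
      simp only [G, hb, cond_false]
      rw [(allUpTo_iff g h _ _).mpr (hchkall t ht)]
      rfl
    refine ⟨T0, (hmem T0 1).mpr (hG1 T0 le_rfl).symm, fun t htt w hw => ?_⟩
    rw [hmem t w] at hw
    rw [hw, hG1 t (le_of_lt htt)]
  · -- unequal case
    rintro ⟨N1, hN1⟩ ⟨N2, hN2⟩ ⟨x0, hx0⟩
    obtain ⟨k0, hk0⟩ := eventual_ne hx0
    set N := max N1 N2 with hN
    set T0 := max N (max (x0 + 1) k0) with hT0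
    have hnotbad : ∀ t, N ≤ t → badB g h (Nat.pair i j, t) = false := by
      intro t ht
      have hA := hN1 t (le_trans (le_max_left _ _) ht)
      have hB := hN2 t (le_trans (le_max_right _ _) ht)
      simp [badB, cod, hup, hA, hB]
    have hG0 : ∀ t, T0 ≤ t → G g h (Nat.pair i j, t) = 0 := by
      intro t ht
      have hb := hnotbad t (le_trans (le_max_left _ _) ht)
      simp only [G, hb, cond_false]
      have hfail : allUpTo g h (Nat.pair i j, t) (t + 1) = false := by
        rw [Bool.eq_false_iff]
        intro hall
        have := (allUpTo_iff g h _ _).mp hall x0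
          (by
            have : x0 + 1 ≤ T0 := le_trans (le_max_left _ _) (le_max_right _ _)
            omega)
        simp only [chk, hup, decide_eq_true_eq] at this
        exact hk0 (max t (max (g x0) (h x0)))
          (le_trans (le_trans (le_trans (le_max_right _ _) (le_max_right _ _) : k0 ≤ T0) ht)
            (le_max_left _ _)) this
      rw [hfail]
      rfl
    refine ⟨T0, (hmem T0 0).mpr (hG0 T0 le_rfl).symm, fun t htt w hw => ?_⟩
    rw [hmem t w] at hw
    rw [hw, hG0 t (le_of_lt htt)]
  · -- divergence case
    intro hne
    rintro ⟨v, u, hvu, hstab⟩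
    have hbadinf : ∀ N, ∃ t, N ≤ t ∧ badB g h (Nat.pair i j, t) = true := by
      intro N
      rcases hne with hni | hnj
      · simp only [Easy, not_exists, not_forall] at hni
        obtain ⟨x, hx1, hx2⟩ := hni N
        refine ⟨x, hx1, ?_⟩
        simp only [Bool.not_eq_true] at hx2
        simp [badB, cod, hup, hx2]
      · simp only [Easy, not_exists, not_forall] at hnj
        obtain ⟨x, hx1, hx2⟩ := hnj N
        refine ⟨x, hx1, ?_⟩
        simp only [Bool.not_eq_true] at hx2
        simp [badB, cod, hup, hx2]
    obtain ⟨t1, ht1u, hbad1⟩ := hbadinf (u + 1)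
    obtain ⟨t2, ht2t1, hbad2⟩ := hbadinf (t1 + 1)
    have hG1 : G g h (Nat.pair i j, t1) = t1 + 2 := by simp [G, hbad1]
    have hG2 : G g h (Nat.pair i j, t2) = t2 + 2 := by simp [G, hbad2]
    have hv1 : t1 + 2 = v := hstab t1 (by omega) _ (hG1 ▸ Part.mem_some _)
    have hv2 : t2 + 2 = v := hstab t2 (by omega) _ (hG2 ▸ Part.mem_some _)
    omega
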